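/- Let φ be a homeomorphism of the Cantor space normalizing Thompson's group V. If v, w ∈ V and x ∈ Q₂ satisfy vx = wx, then log₂((φ^{-1}vφ)'(φ^{-1}x)) − k_φ · log₂(v'(x)) = log₂((φ^{-1}wφ)'(φ^{-1}x)) − k_φ · log₂(w'(x)), where k_φ is the length of a prime word c such that φ^{-1}(Q₂) is the tail equivalence class of c. -/

import Mathlib

/-! Basic setup: the Cantor space, prefix replacement, Thompson's group `V`,
slopes, dyadic rationals, standard dyadic partitions, locally constant maps,
and the permutation model of the twisted fraction groups `LΓ ⋊ V`. -/

abbrev Cantor : Type := ℕ → Bool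

/-- Concatenation of a finite word with an infinite sequence. -/
def cat (w : List Bool) (x : Cantor) : Cantor :=
  fun n => if n < w.length then w.getD n false else x (n - w.length)

/-- The standard dyadic interval (cylinder) associated to a finite word. -/
def cyl (w : List Bool) : Set Cantor := {x | ∃ y : Cantor, x = cat w y}

/-- Membership in Thompson's group `V`: a homeomorphism of the Cantor space which is
everywhere locally given by prefix replacement. -/
def memV (v : Cantor ≃ₜ Cantor) : Prop :=
  ∀ x : Cantor, ∃ (m w : List Bool) (y : Cantor),
    x = cat m y ∧ ∀ z : Cantor, v (cat m z) = cat w z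

/-- `HasLogSlope v x k` : `k = log₂ v'(x)`, base-2 logarithm of the slope of `v` at `x`. -/
def HasLogSlope (v : Cantor ≃ₜ Cantor) (x : Cantor) (k : ℤ) : Prop :=
  ∃ (m w : List Bool) (y : Cantor),
    x = cat m y ∧ (∀ z : Cantor, v (cat m z) = cat w z) ∧
      k = (m.length : ℤ) - (w.length : ℤ)

open Classical in
noncomputable def logSlope (v : Cantor ≃ₜ Cantor) (x : Cantor) : ℤ :=
  if h : ∃ k : ℤ, HasLogSlope v x k then h.choose else 0

/-- The eventually periodic sequence `c∞ = c·c·c⋯`. -/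
def tailSeq (c : List Bool) : Cantor := fun n => c.getD (n % c.length) false

/-- `x` lies in the tail equivalence class of the word `c`, i.e. `x = y·c∞`. -/
def InTailClass (x : Cantor) (c : List Bool) : Prop :=
  ∃ y : List Bool, x = cat y (tailSeq c)

/-- `x` is eventually periodic (a rational point of the Cantor space). -/
def EvPeriodic (x : Cantor) : Prop :=
  ∃ (y c : List Bool), c ≠ [] ∧ x = cat y (tailSeq c)

/-- A prime word: a nonempty word which is not a proper power of a word. -/
def PrimeWord (c : List Bool) : Prop :=
  c ≠ [] ∧ ∀ (d : List Bool) (k : ℕ), 2 ≤ k → c ≠ (List.replicate k d).flatten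

/-- `conjH φ v = φ ∘ v ∘ φ⁻¹`. -/
def conjH (φ v : Cantor ≃ₜ Cantor) : Cantor ≃ₜ Cantor := φ.symm.trans (v.trans φ)

/-- `φ` normalizes Thompson's group `V` inside `Homeo(𝔠)` : `φ V φ⁻¹ = V`. -/
def NormalizesV (φ : Cantor ≃ₜ Cantor) : Prop :=
  (conjH φ) '' {v | memV v} = {v | memV v}

/-- The copy of the dyadic rationals `Q₂ ⊂ 𝔠` : finitely supported sequences. -/
def InQ2 (x : Cantor) : Prop := ∃ n : ℕ, ∀ m, n ≤ m → x m = false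

def zeroSeq : Cantor := fun _ => false

/-- A standard dyadic partition of the Cantor space. -/
def IsSDP (P : Finset (List Bool)) : Prop :=
  ∀ x : Cantor, ∃! w : List Bool, w ∈ P ∧ x ∈ cyl w

/-- Locally constant map: constant on each piece of some standard dyadic partition. -/
def IsLC {Γ : Type*} (f : Cantor → Γ) : Prop :=
  ∃ P : Finset (List Bool), IsSDP P ∧ ∀ w ∈ P, ∀ y z : Cantor, f (cat w y) = f (cat w z)

/-- `h` agrees on `Q₂` with (the restriction of) a locally constant map. -/
def AgreesOnQ2WithLC {Γ : Type*} (h : Cantor → Γ) : Prop :=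
  ∃ b : Cantor → Γ, IsLC b ∧ ∀ x, InQ2 x → h x = b x

section GroupPart
variable {Γ : Type*} [Group Γ]

/-- `alphaWord α₀ α₁ (m₁⋯m_k) = α_{m_k} ∘ ⋯ ∘ α_{m₁}`. -/
def alphaWord (α₀ α₁ : Γ ≃* Γ) (m : List Bool) : Γ ≃* Γ :=
  m.foldl (fun acc b => acc.trans (if b then α₁ else α₀)) (MulEquiv.refl Γ)

open Classical in
/-- The twisting automorphism `τ_{v,x} = α_{v(I)}⁻¹ ∘ α_I` for a standard dyadic
interval `I` containing `x` and adapted to `v`. -/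
noncomputable def tauEquiv (α₀ α₁ : Γ ≃* Γ) (v : Cantor ≃ₜ Cantor) (x : Cantor) : Γ ≃* Γ :=
  if h : ∃ p : List Bool × List Bool, x ∈ cyl p.1 ∧ ∀ z : Cantor, v (cat p.1 z) = cat p.2 z
  then (alphaWord α₀ α₁ h.choose.1).trans (alphaWord α₀ α₁ h.choose.2).symm
  else MulEquiv.refl Γ

/-- The element `a·v` of the twisted `LΓ ⋊ V`, realized as the permutation
`(x,g) ↦ (v x, a(v x) · τ_{v,x}(g))` of `𝔠 × Γ`. -/
noncomputable def permOf (α₀ α₁ : Γ ≃* Γ) (a : Cantor → Γ) (v : Cantor ≃ₜ Cantor) :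
    Equiv.Perm (Cantor × Γ) where
  toFun p := (v p.1, a (v p.1) * tauEquiv α₀ α₁ v p.1 p.2)
  invFun p := (v.symm p.1, (tauEquiv α₀ α₁ v (v.symm p.1)).symm ((a p.1)⁻¹ * p.2))
  left_inv := by rintro ⟨x, g⟩; simp
  right_inv := by rintro ⟨x, g⟩; simp

end GroupPart

/-- The twisted fraction group `G = LΓ ⋊ V` of the triple `(Γ, α₀, α₁)`,
as a group of permutations of `𝔠 × Γ`. -/
noncomputable def Gsub (Γ : Type*) [Group Γ] (α₀ α₁ : Γ ≃* Γ) :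
    Subgroup (Equiv.Perm (Cantor × Γ)) :=
  Subgroup.closure {p | ∃ a v, IsLC a ∧ memV v ∧ p = permOf α₀ α₁ a v}

/-- The untwisted case `α₀ = α₁ = id`. -/
noncomputable def permOfU {Γ : Type*} [Group Γ] (a : Cantor → Γ) (v : Cantor ≃ₜ Cantor) :=
  permOf (MulEquiv.refl Γ) (MulEquiv.refl Γ) a v

/-- The untwisted fraction group `G = LΓ ⋊ V`. -/
noncomputable def GsubU (Γ : Type*) [Group Γ] := Gsub Γ (MulEquiv.refl Γ) (MulEquiv.refl Γ)

/-- `f ∈ N_{K̄}(G)` : the element `f` of `K̄ = ∏_{Q₂}Γ` normalizes `G = LΓ ⋊ V`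
(untwisted case), i.e. `f·a·(f^v)⁻¹` and `f⁻¹·a·f^v` are locally constant on `Q₂`. -/
def InNormKbar {Γ : Type*} [Group Γ] (f : Cantor → Γ) : Prop :=
  ∀ (a : Cantor → Γ) (v : Cantor ≃ₜ Cantor), IsLC a → memV v →
    AgreesOnQ2WithLC (fun x => f x * a x * (f (v.symm x))⁻¹) ∧
    AgreesOnQ2WithLC (fun x => (f x)⁻¹ * a x * f (v.symm x))

namespace Gamma

/-! ### Part 0: words, shifts, concatenation -/

def shf (x : Cantor) (n : ℕ) : Cantor := fun k => x (k + n)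

def tk (x : Cantor) (n : ℕ) : List Bool := List.ofFn (fun i : Fin n => x i)

@[simp] lemma tk_length (x : Cantor) (n : ℕ) : (tk x n).length = n := by simp [tk]

lemma tk_getD (x : Cantor) {n i : ℕ} (h : i < n) : (tk x n).getD i false = x i := by
  rw [List.getD_eq_getElem?_getD]
  simp [tk, List.getElem?_ofFn, h]

lemma cat_lt {w : List Bool} {x : Cantor} {n : ℕ} (h : n < w.length) :
    cat w x n = w.getD n false := by simp [cat, h]

lemma cat_ge {w : List Bool} {x : Cantor} {n : ℕ} (h : w.length ≤ n) :
    cat w x n = x (n - w.length) := by simp [cat, Nat.not_lt.2 h]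

@[simp] lemma cat_add (w : List Bool) (x : Cantor) (n : ℕ) :
    cat w x (n + w.length) = x n := by simp [cat]

lemma cat_cat (a b : List Bool) (z : Cantor) : cat a (cat b z) = cat (a ++ b) z := by
  funext n
  rcases lt_or_ge n a.length with h | h
  · rw [cat_lt h, cat_lt (by simp; omega), List.getD_append _ _ _ _ h]
  · rw [cat_ge h]
    rcases lt_or_ge (n - a.length) b.length with h2 | h2
    · rw [cat_lt h2, cat_lt (by simp; omega)]
      rw [List.getD_eq_getElem?_getD, List.getD_eq_getElem?_getD,
        List.getElem?_append_right h]
    · rw [cat_ge h2, cat_ge (by simp; omega)]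
      congr 1
      simp
      omega

lemma shf_cat (w : List Bool) (z : Cantor) : shf (cat w z) w.length = z := by
  funext k; simp [shf]

lemma cat_tk_shf (x : Cantor) (n : ℕ) : cat (tk x n) (shf x n) = x := by
  funext k
  rcases lt_or_ge k n with h | h
  · rw [cat_lt (by simpa using h), tk_getD _ h]
  · rw [cat_ge (by simpa using h)]
    simp only [shf, tk_length]
    congr 1
    omega

lemma list_eq_of_getD {a b : List Bool} (hl : a.length = b.length)
    (h : ∀ i < a.length, a.getD i false = b.getD i false) : a = b := by
  apply List.ext_getElem hl
  intro i h1 h2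
  have := h i h1
  rwa [List.getD_eq_getElem?_getD, List.getD_eq_getElem?_getD,
    List.getElem?_eq_getElem h1, List.getElem?_eq_getElem h2] at this

lemma eq_cat_parts {x : Cantor} {m : List Bool} {y : Cantor} (h : x = cat m y) :
    m = tk x m.length ∧ y = shf x m.length := by
  constructor
  · apply list_eq_of_getD (by simp)
    intro i hi
    rw [tk_getD _ hi, h, cat_lt hi]
  · funext k
    simp [shf, h, cat]

lemma cat_eq_of_agree {r : Cantor} {m : List Bool}
    (h : ∀ i < m.length, r i = m.getD i false) : r = cat m (shf r m.length) := by
  funext k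
  rcases lt_or_ge k m.length with hk | hk
  · rw [cat_lt hk]; exact h k hk
  · rw [cat_ge hk]; simp only [shf]; congr 1; omega

lemma cat_inj {a b : List Bool} (h : ∀ z, cat a z = cat b z) : a = b := by
  have hl : a.length = b.length := by
    by_contra hne
    rcases Nat.lt_or_ge a.length b.length with hlt | hge
    · have h1 := congrFun (h (fun _ => false)) a.length
      have h2 := congrFun (h (fun _ => true)) a.length
      rw [cat_ge le_rfl, cat_lt hlt] at h1
      rw [cat_ge le_rfl, cat_lt hlt] at h2
      simp at h1 h2
      rw [h1] at h2
      simp at h2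
    · rcases Nat.lt_or_ge b.length a.length with hlt | hge2
      · have h1 := congrFun (h (fun _ => false)) b.length
        have h2 := congrFun (h (fun _ => true)) b.length
        rw [cat_lt hlt, cat_ge le_rfl] at h1
        rw [cat_lt hlt, cat_ge le_rfl] at h2
        simp at h1 h2
        rw [h1] at h2
        simp at h2
      · omega
  apply list_eq_of_getD hl
  intro i hi
  have := congrFun (h (fun _ => false)) i
  rwa [cat_lt hi, cat_lt (hl ▸ hi)] at this

lemma tk_add (x : Cantor) (a d : ℕ) : tk x (a + d) = tk x a ++ tk (shf x a) d := by
  apply list_eq_of_getD (by simp)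
  intro i hi
  simp only [tk_length] at hi
  rcases lt_or_ge i a with h | h
  · rw [tk_getD _ hi, List.getD_append _ _ _ _ (by simpa using h), tk_getD _ h]
  · rw [tk_getD _ hi, List.getD_eq_getElem?_getD (l := tk x a ++ _),
      List.getElem?_append_right (by simpa using h), ← List.getD_eq_getElem?_getD]
    rw [tk_length, tk_getD _ (by omega)]
    simp [shf]
    congr 1
    omega

lemma prefix_extend {x : Cantor} {m w : List Bool} {y y' : Cantor}
    (h1 : x = cat m y) (h2 : x = cat w y') (hle : m.length ≤ w.length) :
    w = m ++ tk y (w.length - m.length) := by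
  obtain ⟨hm, hy⟩ := eq_cat_parts h1
  obtain ⟨hw, _⟩ := eq_cat_parts h2
  conv_lhs => rw [hw, show w.length = m.length + (w.length - m.length) by omega, tk_add, ← hm, ← hy]

end Gamma
namespace Gamma

/-! ### Part 1: periodic tails and prime words -/

lemma tailSeq_lt {c : List Bool} {i : ℕ} (h : i < c.length) :
    tailSeq c i = c.getD i false := by
  simp [tailSeq, Nat.mod_eq_of_lt h]

lemma tailSeq_add (c : List Bool) (n : ℕ) : tailSeq c (n + c.length) = tailSeq c n := by
  simp [tailSeq, Nat.add_mod_right]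

lemma cat_tailSeq {c : List Bool} (hc : c ≠ []) : cat c (tailSeq c) = tailSeq c := by
  have hl : 0 < c.length := List.length_pos_iff.2 hc
  funext n
  rcases lt_or_ge n c.length with h | h
  · rw [cat_lt h, tailSeq_lt h]
  · rw [cat_ge h]
    have h2 : n - c.length + c.length = n := by omega
    conv_rhs => rw [← h2, tailSeq_add]

lemma eq_tailSeq_of_cat {t : List Bool} {y : Cantor} (ht : t ≠ []) (h : y = cat t y) :
    y = tailSeq t := by
  have hl : 0 < t.length := List.length_pos_iff.2 ht
  funext n
  induction n using Nat.strong_induction_on with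
  | _ n ih =>
    rcases lt_or_ge n t.length with hn | hn
    · rw [tailSeq_lt hn]
      conv_lhs => rw [h]
      rw [cat_lt hn]
    · have h1 : y n = y (n - t.length) := by
        conv_lhs => rw [h]
        rw [cat_ge hn]
      rw [h1, ih _ (by omega)]
      have h2 : n - t.length + t.length = n := by omega
      conv_rhs => rw [← h2, tailSeq_add]

lemma flat_rep_length (k : ℕ) (d : List Bool) :
    ((List.replicate k d).flatten).length = k * d.length := by
  induction k with
  | zero => simp
  | succ k ih => simp [List.replicate_succ, ih]; ring

lemma flat_rep_getD {k : ℕ} {d : List Bool} {i : ℕ} (hd : d ≠ []) (h : i < k * d.length) :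
    ((List.replicate k d).flatten).getD i false = d.getD (i % d.length) false := by
  have hl : 0 < d.length := List.length_pos_iff.2 hd
  induction k generalizing i with
  | zero => omega
  | succ k ih =>
    have hh : (k+1) * d.length = k * d.length + d.length := by ring
    rw [List.replicate_succ, List.flatten_cons]
    rcases lt_or_ge i d.length with h1 | h1
    · rw [List.getD_append _ _ _ _ h1, Nat.mod_eq_of_lt h1]
    · rw [List.getD_eq_getElem?_getD, List.getElem?_append_right h1,
        ← List.getD_eq_getElem?_getD, ih (by omega)]
      congr 1
      conv_rhs => rw [show i = i - d.length + d.length by omega]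
      rw [Nat.add_mod_right]

def Per (y : Cantor) (q : ℕ) : Prop := ∀ n, y (n + q) = y n

lemma per_mul {y : Cantor} {q : ℕ} (h : Per y q) (k : ℕ) : Per y (k * q) := by
  induction k with
  | zero => intro n; simp
  | succ k ih => intro n; rw [show n + (k+1)*q = n + k*q + q by ring, h, ih]

lemma per_gcd {y : Cantor} {a b : ℕ} (ha : Per y a) (hb : Per y b) :
    Per y (Nat.gcd a b) := by
  induction a using Nat.strong_induction_on generalizing b with
  | _ a ih =>
    rcases Nat.eq_zero_or_pos a with rfl | hpos
    · simpa [Nat.gcd_zero_left] using hb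
    · rw [Nat.gcd_rec]
      apply ih (b % a) (Nat.mod_lt _ hpos) _ ha
      -- Per y (b % a)
      intro n
      have h1 : b % a + a * (b / a) = b := Nat.mod_add_div b a
      have h2 : y (n + b) = y n := hb n
      have h3 : y (n + (b % a)) = y (n + (b % a) + a * (b / a)) := by
        rw [show a * (b/a) = (b/a) * a by ring]
        exact (per_mul ha (b/a) _).symm
      rw [h3, show n + b % a + a * (b/a) = n + b by omega, h2]

lemma per_of_mod {y : Cantor} {g : ℕ} (hg : 0 < g) (h : Per y g) (i : ℕ) :
    y i = y (i % g) := by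
  conv_lhs => rw [show i = i % g + (i / g) * g by rw [Nat.mod_add_div']]
  exact per_mul h (i / g) _

lemma tailSeq_per {c : List Bool} : Per (tailSeq c) c.length :=
  fun n => tailSeq_add c n

/-- If `p = s · c∞` and `p` is eventually `q`-periodic then `c∞` is `q`-periodic. -/
lemma per_tail_of_evper {p : Cantor} {s c : List Bool} (hc : c ≠ [])
    (hp : p = cat s (tailSeq c)) {q B : ℕ} (h : ∀ j, B ≤ j → p (j + q) = p j) :
    Per (tailSeq c) q := by
  have hl : 0 < c.length := List.length_pos_iff.2 hc
  intro n
  set M := B + s.length with hM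
  have key : ∀ i, tailSeq c i = p (i + s.length) := by
    intro i
    rw [hp, cat_add]
  have hper := tailSeq_per (c := c)
  calc tailSeq c (n + q) = tailSeq c (n + q + M * c.length) := (per_mul hper M _).symm
    _ = p (n + q + M * c.length + s.length) := key _
    _ = p (n + M * c.length + s.length + q) := by ring_nf
    _ = p (n + M * c.length + s.length) := h _ (by
          have : M ≤ M * c.length := Nat.le_mul_of_pos_right _ hl
          omega)
    _ = tailSeq c (n + M * c.length) := (key _).symm
    _ = tailSeq c n := per_mul hper M n

lemma getD_take {c : List Bool} {g j : ℕ} (hj : j < g) (hg : g ≤ c.length) :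
    (c.take g).getD j false = c.getD j false := by
  rw [List.getD_eq_getElem?_getD, List.getD_eq_getElem?_getD, List.getElem?_take]
  simp [hj]

lemma prime_dvd_per {c : List Bool} (hc : PrimeWord c) {q : ℕ}
    (h : Per (tailSeq c) q) : c.length ∣ q := by
  have hne := hc.1
  have hl : 0 < c.length := List.length_pos_iff.2 hne
  set g := Nat.gcd q c.length with hg
  have hPer : Per (tailSeq c) g := per_gcd h tailSeq_per
  have hgdvd : g ∣ c.length := Nat.gcd_dvd_right _ _
  have hgpos : 0 < g := Nat.pos_of_ne_zero (by
    intro h0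
    rw [hg] at h0
    have := Nat.eq_zero_of_gcd_eq_zero_right h0
    omega)
  rcases eq_or_lt_of_le (Nat.le_of_dvd hl hgdvd) with heq | hlt
  · rw [← heq]
    exact Nat.gcd_dvd_left q c.length
  · exfalso
    set k := c.length / g with hk
    have hkg : k * g = c.length := Nat.div_mul_cancel hgdvd
    have hk2 : 2 ≤ k := by
      rcases Nat.lt_or_ge k 2 with h2 | h2
      · interval_cases k <;> omega
      · exact h2
    apply hc.2 (c.take g) k hk2
    have hgl : g ≤ c.length := le_of_lt hlt
    have htl : (c.take g).length = g := by simp [hgl]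
    apply list_eq_of_getD
    · rw [flat_rep_length, htl, hkg]
    · intro i hi
      have hiL : i < c.length := hi
      rw [flat_rep_getD (by intro h0; rw [h0] at htl; simp at htl; omega) (by rw [htl, hkg]; exact hi)]
      rw [htl, getD_take (Nat.mod_lt _ hgpos) hgl]
      have e1 : c.getD i false = tailSeq c i := (tailSeq_lt hiL).symm
      have e2 : c.getD (i % g) false = tailSeq c (i % g) := (tailSeq_lt (by
        have := Nat.mod_lt i hgpos; omega)).symm
      rw [e1, e2, per_of_mod hgpos hPer i]

/-- Key divisibility: two prefix-decompositions of a point in the tail class of a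
prime word `c`, with the *same* tail, have lengths congruent mod `|c|`. -/
lemma prime_dvd_diff {p : Cantor} {s c m w : List Bool} {y : Cantor}
    (hc : PrimeWord c) (hp : p = cat s (tailSeq c))
    (h1 : p = cat m y) (h2 : p = cat w y) :
    (c.length : ℤ) ∣ (m.length : ℤ) - (w.length : ℤ) := by
  have key : ∀ (a b : List Bool), p = cat a y → p = cat b y → a.length ≤ b.length →
      (c.length : ℤ) ∣ (b.length : ℤ) - (a.length : ℤ) := by
    intro a b ha hb hle
    set q := b.length - a.length with hq
    have hy1 : ∀ n, y n = p (n + a.length) := by intro n; rw [ha, cat_add]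
    have hy2 : ∀ n, y n = p (n + b.length) := by intro n; rw [hb, cat_add]
    have hper : ∀ j, a.length ≤ j → p (j + q) = p j := by
      intro j hj
      have e1 : p j = y (j - a.length) := by
        rw [hy1 (j - a.length)]; congr 1; omega
      have e2 : p (j + q) = y (j - a.length) := by
        rw [hy2 (j - a.length)]; congr 1; omega
      rw [e1, e2]
    have := prime_dvd_per hc (per_tail_of_evper hc.1 hp hper)
    have : (c.length : ℤ) ∣ (q : ℤ) := Int.natCast_dvd_natCast.2 this
    have hqq : (b.length : ℤ) - a.length = q := by omega
    rwa [hqq]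
  rcases Nat.le_or_le m.length w.length with h | h
  · have h3 := key m w h1 h2 h
    have e : (m.length : ℤ) - w.length = -((w.length : ℤ) - m.length) := by ring
    rw [e]
    exact dvd_neg.2 h3
  · exact key w m h2 h1 h

end Gamma
namespace Gamma

/-! ### Part 2: slope calculus -/

/-- Slopes are unique. -/
lemma slope_unique {v : Cantor ≃ₜ Cantor} {x : Cantor} {k k' : ℤ}
    (h : HasLogSlope v x k) (h' : HasLogSlope v x k') : k = k' := by
  -- wlog on lengths
  have key : ∀ (k k' : ℤ), HasLogSlope v x k → HasLogSlope v x k' → k ≤ k' → k = k'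
      := by
    clear h h' k k'
    intro k k' h h' hle
    obtain ⟨m, w, y, hxy, hv, hk⟩ := h
    obtain ⟨m', w', y', hxy', hv', hk'⟩ := h'
    rcases Nat.le_or_le m.length m'.length with hm | hm
    · -- m' = m ++ s
      have hext := prefix_extend hxy hxy' hm
      set s := tk y (m'.length - m.length) with hs
      have hww' : ∀ z, cat (w ++ s) z = cat w' z := by
        intro z
        rw [← cat_cat, ← hv (cat s z), cat_cat, ← hext, hv' z]
      have := cat_inj hww'
      have hlen : w.length + s.length = w'.length := by rw [← this]; simp
      have hsl : s.length = m'.length - m.length := by simp [hs]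
      omega
    · have hext := prefix_extend hxy' hxy hm
      set s := tk y' (m.length - m'.length) with hs
      have hww' : ∀ z, cat (w' ++ s) z = cat w z := by
        intro z
        rw [← cat_cat, ← hv' (cat s z), cat_cat, ← hext, hv z]
      have := cat_inj hww'
      have hlen : w'.length + s.length = w.length := by rw [← this]; simp
      have hsl : s.length = m.length - m'.length := by simp [hs]
      omega
  rcases le_total k k' with hle | hle
  · exact key k k' h h' hle
  · exact (key k' k h' h hle).symm

/-- Chain rule. -/
lemma slope_comp {v u : Cantor ≃ₜ Cantor} {x : Cantor} {k j : ℤ}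
    (hv : HasLogSlope v x k) (hu : HasLogSlope u (v x) j) :
    HasLogSlope (v.trans u) x (k + j) := by
  obtain ⟨m, w, y, hxy, hvr, hk⟩ := hv
  obtain ⟨m', w', y', hxy', hur, hj⟩ := hu
  have hvx : v x = cat w y := by rw [hxy, hvr]
  rcases Nat.le_or_le m'.length w.length with hm | hm
  · -- w = m' ++ s
    have hext := prefix_extend hxy' hvx hm
    set s := tk y' (w.length - m'.length) with hs
    refine ⟨m, w' ++ s, y, hxy, ?_, ?_⟩
    · intro z
      rw [Homeomorph.trans_apply, hvr, hext, ← cat_cat, hur, cat_cat]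
    · have : s.length = w.length - m'.length := by simp [hs]
      simp only [List.length_append]
      omega
  · -- m' = w ++ s
    have hext := prefix_extend hvx hxy' hm
    set s := tk y (m'.length - w.length) with hs
    have hys : cat s (shf y (m'.length - w.length)) = y := cat_tk_shf y _
    refine ⟨m ++ s, w', shf y (m'.length - w.length), ?_, fun z => ?_, ?_⟩
    · rw [hxy, ← cat_cat, hys]
    · rw [Homeomorph.trans_apply, ← cat_cat, hvr, cat_cat, ← hext, hur]
    · have hsl : s.length = m'.length - w.length := by simp [hs]
      simp only [List.length_append]
      omega

lemma slope_symm {v : Cantor ≃ₜ Cantor} {x : Cantor} {k : ℤ}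
    (h : HasLogSlope v x k) : HasLogSlope v.symm (v x) (-k) := by
  obtain ⟨m, w, y, hxy, hvr, hk⟩ := h
  refine ⟨w, m, y, by rw [hxy, hvr], fun z => ?_, by omega⟩
  rw [← hvr z, Homeomorph.symm_apply_apply]

lemma slope_of_rule {v : Cantor ≃ₜ Cantor} {x : Cantor} {m w : List Bool} {y : Cantor}
    (hxy : x = cat m y) (hr : ∀ z, v (cat m z) = cat w z) :
    HasLogSlope v x ((m.length : ℤ) - w.length) := ⟨m, w, y, hxy, hr, rfl⟩

/-- local identity near a point -/
def LocalIdAt (v : Cantor ≃ₜ Cantor) (x : Cantor) : Prop :=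
  ∃ m : List Bool, x = cat m (shf x m.length) ∧ ∀ z, v (cat m z) = cat m z

lemma localId_slope {v : Cantor ≃ₜ Cantor} {x : Cantor} (h : LocalIdAt v x) :
    HasLogSlope v x 0 := by
  obtain ⟨m, hx, hr⟩ := h
  exact ⟨m, m, shf x m.length, hx, hr, by omega⟩

lemma localId_of_slope_zero {v : Cantor ≃ₜ Cantor} {x : Cantor}
    (hfix : v x = x) (h : HasLogSlope v x 0) : LocalIdAt v x := by
  obtain ⟨m, w, y, hxy, hvr, hk⟩ := h
  have hvx : x = cat w y := by rw [← hfix, hxy, hvr]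
  have hmw : m = w := by
    obtain ⟨hm, _⟩ := eq_cat_parts hxy
    obtain ⟨hw, _⟩ := eq_cat_parts hvx
    rw [hm, hw]
    congr 1
    omega
  refine ⟨m, ?_, by rw [← hmw] at hvr; exact hvr⟩
  obtain ⟨_, hy⟩ := eq_cat_parts hxy
  rw [← hy, ← hxy]

/-- At a fixed point, the two prefix-decompositions have the same tail. -/
lemma fix_both_prefix {v : Cantor ≃ₜ Cantor} {x : Cantor} {k : ℤ}
    (hfix : v x = x) (h : HasLogSlope v x k) :
    ∃ m w : List Bool, x = cat m (shf x m.length) ∧ x = cat w (shf x m.length) ∧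
      (∀ z, v (cat m z) = cat w z) ∧ k = (m.length : ℤ) - w.length := by
  obtain ⟨m, w, y, hxy, hvr, hk⟩ := h
  have hvx : x = cat w y := by rw [← hfix, hxy, hvr]
  obtain ⟨_, hy⟩ := eq_cat_parts hxy
  exact ⟨m, w, by rw [← hy, ← hxy], by rw [← hy, ← hvx], hvr, hk⟩

/-! ### conjugation -/

lemma conjH_apply (ψ v : Cantor ≃ₜ Cantor) (z : Cantor) :
    conjH ψ v z = ψ (v (ψ.symm z)) := rfl

lemma conjH_trans (ψ a b : Cantor ≃ₜ Cantor) :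
    conjH ψ (a.trans b) = (conjH ψ a).trans (conjH ψ b) := by
  ext z
  simp [conjH_apply, Homeomorph.trans_apply]

lemma conjH_symm (ψ a : Cantor ≃ₜ Cantor) :
    conjH ψ a.symm = (conjH ψ a).symm := by
  apply Homeomorph.ext
  intro z
  apply (conjH ψ a).injective
  rw [Homeomorph.apply_symm_apply]
  show ψ (a (ψ.symm (ψ (a.symm (ψ.symm z))))) = z
  simp

lemma conjH_conjH (φ a : Cantor ≃ₜ Cantor) : conjH φ (conjH φ.symm a) = a := by
  ext z
  simp [conjH_apply]

lemma conjH_fix {ψ v : Cantor ≃ₜ Cantor} {x : Cantor} (h : v x = x) :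
    conjH ψ v (ψ x) = ψ x := by
  rw [conjH_apply, Homeomorph.symm_apply_apply, h]

/-! ### iterates -/

def hiter (u : Cantor ≃ₜ Cantor) : ℕ → (Cantor ≃ₜ Cantor)
  | 0 => Homeomorph.refl Cantor
  | n + 1 => (hiter u n).trans u

lemma hiter_apply_succ (u : Cantor ≃ₜ Cantor) (n : ℕ) (z : Cantor) :
    hiter u (n+1) z = u (hiter u n z) := rfl

lemma hiter_fix {u : Cantor ≃ₜ Cantor} {x : Cantor} (h : u x = x) (n : ℕ) :
    hiter u n x = x := by
  induction n with
  | zero => rfl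
  | succ n ih => rw [hiter_apply_succ, ih, h]

lemma hiter_slope {u : Cantor ≃ₜ Cantor} {x : Cantor} {k : ℤ}
    (hfix : u x = x) (h : HasLogSlope u x k) (n : ℕ) :
    HasLogSlope (hiter u n) x (n * k) := by
  induction n with
  | zero =>
    exact ⟨[], [], x, by funext i; simp [cat], fun _ => rfl, by simp⟩
  | succ n ih =>
    have := slope_comp ih (by rw [hiter_fix hfix]; exact h)
    have e : (↑(n+1) : ℤ) * k = n * k + k := by push_cast; ring
    rw [e]
    exact this

lemma conjH_hiter (ψ u : Cantor ≃ₜ Cantor) (n : ℕ) :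
    conjH ψ (hiter u n) = hiter (conjH ψ u) n := by
  induction n with
  | zero =>
    ext z
    simp [conjH_apply, hiter, Homeomorph.refl_apply]
  | succ n ih =>
    show conjH ψ ((hiter u n).trans u) = (hiter (conjH ψ u) n).trans (conjH ψ u)
    rw [conjH_trans, ih]

lemma hiter_inv_cancel (u : Cantor ≃ₜ Cantor) (n : ℕ) (z : Cantor) :
    hiter u n (hiter u.symm n z) = z := by
  induction n generalizing z with
  | zero => rfl
  | succ n ih =>
    rw [hiter_apply_succ, hiter_apply_succ]
    have comm : ∀ m w, hiter u m (u.symm w) = u.symm (hiter u m w) := by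
      intro m
      induction m with
      | zero => intro w; rfl
      | succ m ihm =>
        intro w
        rw [hiter_apply_succ, hiter_apply_succ, ihm]
        simp
    rw [comm, ih, Homeomorph.apply_symm_apply]

end Gamma
namespace Gamma

/-! ### Part 3: topology -/

open Filter

lemma isOpen_agreeSet (g : ℕ → Bool) (n : ℕ) :
    IsOpen {z : Cantor | ∀ i < n, z i = g i} := by
  have he : {z : Cantor | ∀ i < n, z i = g i}
      = ⋂ i ∈ Finset.range n, {z : Cantor | z i = g i} := by
    ext z; simp
  rw [he]
  apply isOpen_biInter_finset
  intro i _
  show IsOpen {z : Cantor | z i = g i}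
  have he2 : {z : Cantor | z i = g i} = (fun z : Cantor => z i) ⁻¹' {g i} := rfl
  rw [he2]
  exact (isOpen_discrete _).preimage (continuous_apply i)

lemma exists_prefix_subset {U : Set Cantor} (hU : IsOpen U) {q : Cantor} (hq : q ∈ U) :
    ∃ n, ∀ z : Cantor, (∀ i < n, z i = q i) → z ∈ U := by
  rw [isOpen_pi_iff] at hU
  obtain ⟨I, u, hIu, hsub⟩ := hU q hq
  refine ⟨I.sup id + 1, fun z hz => hsub ?_⟩
  intro i hi
  have h1 : i ≤ I.sup id := Finset.le_sup (f := id) hi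
  rw [hz i (by omega)]
  exact (hIu i hi).2

lemma localId_conj {ψ u : Cantor ≃ₜ Cantor} {x : Cantor} (h : LocalIdAt u x) :
    LocalIdAt (conjH ψ u) (ψ x) := by
  obtain ⟨m, hx, hr⟩ := h
  set A := {z : Cantor | ∀ i < m.length, (ψ.symm z) i = m.getD i false} with hA
  have hAopen : IsOpen A :=
    (isOpen_agreeSet (fun i => m.getD i false) m.length).preimage ψ.symm.continuous
  have hmem : ψ x ∈ A := by
    intro i hi
    rw [Homeomorph.symm_apply_apply]
    conv_lhs => rw [hx]
    rw [cat_lt hi]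
  obtain ⟨n, hn⟩ := exists_prefix_subset hAopen hmem
  refine ⟨tk (ψ x) n, ?_, fun z => ?_⟩
  · rw [tk_length]
    exact (cat_tk_shf (ψ x) n).symm
  · have hrA : cat (tk (ψ x) n) z ∈ A := by
      apply hn
      intro i hi
      rw [cat_lt (by simpa using hi), tk_getD _ hi]
    have h1 : ψ.symm (cat (tk (ψ x) n) z)
        = cat m (shf (ψ.symm (cat (tk (ψ x) n) z)) m.length) :=
      cat_eq_of_agree hrA
    rw [conjH_apply]
    conv_lhs => rw [h1, hr, ← h1]
    simp

lemma tendsto_iff_eventually (f : ℕ → Cantor) (p : Cantor) :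
    Tendsto f atTop (nhds p) ↔ ∀ j, ∀ᶠ n in atTop, f n j = p j := by
  rw [tendsto_pi_nhds]
  apply forall_congr'
  intro j
  rw [nhds_discrete, Filter.tendsto_pure]

lemma eventually_agree {f : ℕ → Cantor} {p : Cantor}
    (h : Tendsto f atTop (nhds p)) (N : ℕ) :
    ∀ᶠ n in atTop, ∀ i < N, f n i = p i := by
  have h2 := (tendsto_iff_eventually f p).1 h
  induction N with
  | zero => filter_upwards with n i hi; omega
  | succ N ih =>
    filter_upwards [ih, h2 N] with n h1 h3 i hi
    rcases Nat.lt_or_ge i N with h4 | h4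
    · exact h1 i h4
    · have : i = N := by omega
      rw [this]; exact h3

lemma tendsto_cat_rep (w t : List Bool) (ht : t ≠ []) (ξ : Cantor) :
    Tendsto (fun n => cat w (cat ((List.replicate n t).flatten) ξ)) atTop
      (nhds (cat w (tailSeq t))) := by
  have hl : 0 < t.length := List.length_pos_iff.2 ht
  rw [tendsto_iff_eventually]
  intro j
  filter_upwards [Filter.eventually_ge_atTop (j+1)] with n hn
  rcases lt_or_ge j w.length with h | h
  · rw [cat_lt h, cat_lt h]
  · rw [cat_ge h, cat_ge h]
    have hj : j - w.length < n * t.length := by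
      have : n ≤ n * t.length := Nat.le_mul_of_pos_right _ hl
      omega
    rw [cat_lt (by rwa [flat_rep_length]), flat_rep_getD ht hj]
    rfl

lemma hiter_cat {u : Cantor ≃ₜ Cantor} {a t : List Bool}
    (hr : ∀ z, u (cat a z) = cat a (cat t z)) (n : ℕ) (z : Cantor) :
    hiter u n (cat a z) = cat a (cat ((List.replicate n t).flatten) z) := by
  induction n with
  | zero =>
    show cat a z = cat a (cat [] z)
    have hnil : cat [] z = z := by funext i; simp [cat]
    rw [hnil]
  | succ n ih =>
    rw [hiter_apply_succ, ih, hr, List.replicate_succ, List.flatten_cons, cat_cat t]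

/-- Sign lemma: a contracting fixed point cannot conjugate to an expanding one. -/
lemma sign_lemma {ψ u : Cantor ≃ₜ Cantor} {p : Cantor} {k k' : ℤ}
    (hfix : u p = p) (hk : HasLogSlope u p k) (hkneg : k < 0)
    (hk' : HasLogSlope (conjH ψ u) (ψ p) k') (hkpos : 0 < k') : False := by
  set u' := conjH ψ u with hu'
  set p' := ψ p with hp'
  have hfix' : u' p' = p' := conjH_fix hfix
  -- contracting data at p
  obtain ⟨m, w, hpm, hpw, hr, hkmw⟩ := fix_both_prefix hfix hk
  have hlmw : m.length < w.length := by omega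
  have hext := prefix_extend hpm hpw (le_of_lt hlmw)
  set t₀ := tk (shf p m.length) (w.length - m.length) with ht₀
  have ht₀len : 0 < t₀.length := by simp [ht₀]; omega
  have ht₀ne : t₀ ≠ [] := by intro h0; rw [h0] at ht₀len; simp at ht₀len
  have hr2 : ∀ z, u (cat m z) = cat m (cat t₀ z) := by
    intro z
    rw [hr, hext, cat_cat]
  have hY : shf p m.length = tailSeq t₀ := by
    apply eq_tailSeq_of_cat ht₀ne
    have h1 : cat m (shf p m.length) = cat m (cat t₀ (shf p m.length)) := by
      rw [cat_cat, ← hext, ← hpm, ← hpw]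
    have := congrArg (fun r => shf r m.length) h1
    simpa [shf_cat] using this
  -- expanding data at p'
  obtain ⟨m', w', hpm', hpw', hr', hkmw'⟩ := fix_both_prefix hfix' hk'
  have hlmw' : w'.length < m'.length := by omega
  have hext' := prefix_extend hpw' hpm' (le_of_lt hlmw')
  set t' := tk (shf p' m'.length) (m'.length - w'.length) with ht'
  have ht'len : 0 < t'.length := by simp [ht']; omega
  have ht'ne : t' ≠ [] := by intro h0; rw [h0] at ht'len; simp at ht'len
  have hrinv : ∀ ξ, u'.symm (cat w' ξ) = cat w' (cat t' ξ) := by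
    intro ξ
    have h1 : u' (cat m' ξ) = cat w' ξ := hr' ξ
    have := congrArg u'.symm h1
    rw [Homeomorph.symm_apply_apply] at this
    rw [← this, hext', cat_cat]
  have hY' : shf p' m'.length = tailSeq t' := by
    apply eq_tailSeq_of_cat ht'ne
    have h1 : cat w' (shf p' m'.length) = cat w' (cat t' (shf p' m'.length)) := by
      rw [cat_cat, ← hext', ← hpw', ← hpm']
    have := congrArg (fun r => shf r w'.length) h1
    simpa [shf_cat] using this
  have hp'w : p' = cat w' (tailSeq t') := by
    rw [← hY']
    -- p' = cat w' (shf p' m'.length)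
    exact hpw'
  -- the key claim: every point of cyl w' equals p'
  have key : ∀ ξ : Cantor, cat w' ξ = p' := by
    intro ξ
    set z' := cat w' ξ with hz'
    set r : ℕ → Cantor := fun n => hiter u.symm n (ψ.symm z') with hrdef
    have hrn : ∀ n, r n = ψ.symm (cat w' (cat ((List.replicate n t').flatten) ξ)) := by
      intro n
      have e1 : hiter u'.symm n z' = cat w' (cat ((List.replicate n t').flatten) ξ) :=
        hiter_cat (fun z => hrinv z) n ξ
      have e2 : hiter u'.symm n z' = ψ (hiter u.symm n (ψ.symm z')) := by
        rw [hu', ← conjH_symm, ← conjH_hiter, conjH_apply]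
      rw [hrdef]
      simp only
      rw [← Homeomorph.symm_apply_apply ψ (hiter u.symm n (ψ.symm z')), ← e2, e1]
    have htend : Tendsto r atTop (nhds p) := by
      have h1 := tendsto_cat_rep w' t' ht'ne ξ
      have h2 := ((ψ.symm.continuous.tendsto (cat w' (tailSeq t'))).comp h1)
      rw [← hp'w] at h2
      have h3 : ψ.symm p' = p := by rw [hp']; simp
      rw [h3] at h2
      have : r = (fun z => ψ.symm z) ∘ (fun n => cat w' (cat ((List.replicate n t').flatten) ξ)) := by
        funext n; rw [hrn n]; rfl
      rwa [this]
    have hev := eventually_agree htend m.length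
    rw [Filter.eventually_atTop] at hev
    obtain ⟨N₀, hN₀⟩ := hev
    have main : ∀ n ≥ N₀, ψ.symm z' = cat m (cat ((List.replicate n t₀).flatten) (shf (r n) m.length)) := by
      intro n hn
      have hagree : ∀ i < m.length, r n i = m.getD i false := by
        intro i hi
        rw [hN₀ n hn i hi]
        conv_lhs => rw [hpm]
        rw [cat_lt hi]
      have h1 : r n = cat m (shf (r n) m.length) := cat_eq_of_agree hagree
      have h2 : ψ.symm z' = hiter u n (r n) := by
        rw [hrdef]
        simp only
        rw [hiter_inv_cancel]
      rw [h2]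
      conv_lhs => rw [h1]
      exact hiter_cat hr2 n _
    have hzp : ψ.symm z' = p := by
      funext j
      obtain ⟨n, hn1, hn2⟩ : ∃ n, N₀ ≤ n ∧ j < n := ⟨max N₀ (j+1), le_max_left _ _, by
        have := le_max_right N₀ (j+1); omega⟩
      rw [main n hn1]
      rcases lt_or_ge j m.length with h | h
      · rw [cat_lt h]
        conv_rhs => rw [hpm]
        rw [cat_lt h]
      · rw [cat_ge h]
        have hj : j - m.length < n * t₀.length := by
          have : n ≤ n * t₀.length := Nat.le_mul_of_pos_right _ ht₀len
          omega
        rw [cat_lt (by rwa [flat_rep_length]), flat_rep_getD ht₀ne hj]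
        conv_rhs => rw [hpm]
        rw [cat_ge h, hY]
        rfl
    have hfin := congrArg ψ hzp
    rw [Homeomorph.apply_symm_apply] at hfin
    exact hfin
  have h1 := congrFun (key (fun _ => false)) w'.length
  have h2 := congrFun (key (fun _ => true)) w'.length
  rw [cat_ge le_rfl] at h1 h2
  rw [← h1] at h2
  simp at h2

end Gamma
namespace Gamma

/-! ### Part 4: the proportionality relation -/

lemma conj_slope_zero {ψ u : Cantor ≃ₜ Cantor} {p : Cantor}
    (hfix : u p = p) (h : HasLogSlope u p 0) :
    HasLogSlope (conjH ψ u) (ψ p) 0 :=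
  localId_slope (localId_conj (localId_of_slope_zero hfix h))

lemma symm_fix {u : Cantor ≃ₜ Cantor} {p : Cantor} (h : u p = p) : u.symm p = p := by
  conv_lhs => rw [← h]
  simp

lemma prop_aux {ψ u₁ u₂ : Cantor ≃ₜ Cantor} {p : Cantor} {k₁ k₂ k₁' k₂' : ℤ}
    (f1 : u₁ p = p) (f2 : u₂ p = p)
    (s1 : HasLogSlope u₁ p k₁) (s2 : HasLogSlope u₂ p k₂)
    (c1 : HasLogSlope (conjH ψ u₁) (ψ p) k₁') (c2 : HasLogSlope (conjH ψ u₂) (ψ p) k₂')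
    (h1 : 0 ≤ k₁) (h2 : 0 ≤ k₂) : k₂ * k₁' = k₁ * k₂' := by
  set n₁ := k₁.toNat with hn₁
  set n₂ := k₂.toNat with hn₂
  have e₁ : (n₁ : ℤ) = k₁ := Int.toNat_of_nonneg h1
  have e₂ : (n₂ : ℤ) = k₂ := Int.toNat_of_nonneg h2
  set h := (hiter u₁ n₂).trans (hiter u₂.symm n₁) with hh
  have hfixh : h p = p := by
    rw [hh]
    show hiter u₂.symm n₁ (hiter u₁ n₂ p) = p
    rw [hiter_fix f1, hiter_fix (symm_fix f2)]
  have hs2s : HasLogSlope u₂.symm p (-k₂) := by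
    have := slope_symm s2
    rwa [f2] at this
  have hsh : HasLogSlope h p (n₂ * k₁ + n₁ * (-k₂)) :=
    slope_comp (hiter_slope f1 s1 n₂) (by
      rw [hiter_fix f1]
      exact hiter_slope (symm_fix f2) hs2s n₁)
  have hzero : (n₂ : ℤ) * k₁ + n₁ * (-k₂) = 0 := by rw [e₁, e₂]; ring
  rw [hzero] at hsh
  have hconj : HasLogSlope (conjH ψ h) (ψ p) 0 := conj_slope_zero hfixh hsh
  have hconjeq : conjH ψ h = (hiter (conjH ψ u₁) n₂).trans (hiter (conjH ψ u₂).symm n₁) := by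
    rw [hh, conjH_trans, conjH_hiter, conjH_hiter, conjH_symm]
  have hc2s : HasLogSlope (conjH ψ u₂).symm (ψ p) (-k₂') := by
    have := slope_symm c2
    rwa [conjH_fix f2] at this
  have hsconj : HasLogSlope (conjH ψ h) (ψ p) (n₂ * k₁' + n₁ * (-k₂')) := by
    rw [hconjeq]
    exact slope_comp (hiter_slope (conjH_fix f1) c1 n₂) (by
      rw [hiter_fix (conjH_fix f1)]
      exact hiter_slope (symm_fix (conjH_fix f2)) hc2s n₁)
  have := slope_unique hconj hsconj
  have : (n₂ : ℤ) * k₁' = n₁ * k₂' := by linarith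
  rw [e₁, e₂] at this
  linarith

lemma slope_prop {ψ u₁ u₂ : Cantor ≃ₜ Cantor} {p : Cantor} {k₁ k₂ k₁' k₂' : ℤ}
    (f1 : u₁ p = p) (f2 : u₂ p = p)
    (s1 : HasLogSlope u₁ p k₁) (s2 : HasLogSlope u₂ p k₂)
    (c1 : HasLogSlope (conjH ψ u₁) (ψ p) k₁') (c2 : HasLogSlope (conjH ψ u₂) (ψ p) k₂') :
    k₂ * k₁' = k₁ * k₂' := by
  have flip : ∀ (u : Cantor ≃ₜ Cantor) (k k' : ℤ), u p = p → HasLogSlope u p k →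
      HasLogSlope (conjH ψ u) (ψ p) k' →
      (u.symm p = p ∧ HasLogSlope u.symm p (-k) ∧ HasLogSlope (conjH ψ u.symm) (ψ p) (-k')) := by
    intro u k k' hf hs hc
    refine ⟨symm_fix hf, ?_, ?_⟩
    · have := slope_symm hs; rwa [hf] at this
    · rw [conjH_symm]
      have := slope_symm hc; rwa [conjH_fix hf] at this
  rcases le_or_gt 0 k₁ with hk₁ | hk₁ <;> rcases le_or_gt 0 k₂ with hk₂ | hk₂
  · exact prop_aux f1 f2 s1 s2 c1 c2 hk₁ hk₂
  · obtain ⟨f2', s2', c2'⟩ := flip u₂ k₂ k₂' f2 s2 c2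
    have := prop_aux f1 f2' s1 s2' c1 c2' hk₁ (by omega)
    linarith
  · obtain ⟨f1', s1', c1'⟩ := flip u₁ k₁ k₁' f1 s1 c1
    have := prop_aux f1' f2 s1' s2 c1' c2 (by omega) hk₂
    linarith
  · obtain ⟨f1', s1', c1'⟩ := flip u₁ k₁ k₁' f1 s1 c1
    obtain ⟨f2', s2', c2'⟩ := flip u₂ k₂ k₂' f2 s2 c2
    have := prop_aux f1' f2' s1' s2' c1' c2' (by omega) (by omega)
    linarith

/-! ### normalizer bookkeeping -/

lemma conjH_symm_conjH (φ a : Cantor ≃ₜ Cantor) : conjH φ.symm (conjH φ a) = a := by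
  apply Homeomorph.ext
  intro z
  simp [conjH_apply]

lemma memV_slope {v : Cantor ≃ₜ Cantor} (hv : memV v) (p : Cantor) :
    ∃ k, HasLogSlope v p k := by
  obtain ⟨m, w, y, h1, h2⟩ := hv p
  exact ⟨_, slope_of_rule h1 h2⟩

lemma memV_conj {φ v : Cantor ≃ₜ Cantor} (hφ : NormalizesV φ) (hv : memV v) :
    memV (conjH φ v) := by
  have h1 : conjH φ v ∈ (conjH φ) '' {v | memV v} := ⟨v, hv, rfl⟩
  rw [NormalizesV] at hφ
  rw [hφ] at h1
  exact h1

lemma memV_conj_symm {φ v : Cantor ≃ₜ Cantor} (hφ : NormalizesV φ) (hv : memV v) :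
    memV (conjH φ.symm v) := by
  have h1 : v ∈ (conjH φ) '' {v | memV v} := by
    rw [NormalizesV] at hφ; rw [hφ]; exact hv
  obtain ⟨g, hg, hgv⟩ := h1
  have h2 : g = conjH φ.symm v := by
    have := congrArg (conjH φ.symm) hgv
    rwa [conjH_symm_conjH] at this
  rwa [h2] at hg

end Gamma
namespace Gamma

/-! ### Part 5: test elements of V -/

def DevPred (t : List Bool) (x : Cantor) (i : ℕ) : Prop :=
  i < t.length ∧ x i ≠ t.getD i false

instance (t : List Bool) (x : Cantor) : DecidablePred (DevPred t x) := fun i => by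
  unfold DevPred; infer_instance

instance (t : List Bool) (x : Cantor) : Decidable (∃ i, DevPred t x i) :=
  decidable_of_iff (∃ i, i < t.length ∧ x i ≠ t.getD i false) (by
    constructor
    · rintro ⟨i, hi, hne⟩; exact ⟨i, hi, hne⟩
    · rintro ⟨i, hi, hne⟩; exact ⟨i, hi, hne⟩)

/-- The forward map: `t·t·z ↦ t·z` on addresses, suitably bijectivized. -/
noncomputable def fF (t : List Bool) (x : Cantor) : Cantor :=
  if h : ∃ i, DevPred t x i then
    (if x (Nat.find h + 1) = true
      then cat (t ++ tk x (Nat.find h + 1)) (shf x (Nat.find h + 2))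
      else cat (tk x (Nat.find h + 1)) (shf x (Nat.find h + 2)))
  else cat (t ++ t) (shf x t.length)

noncomputable def fG (t : List Bool) (y : Cantor) : Cantor :=
  if h : ∃ i, DevPred t y i then
    cat (tk y (Nat.find h + 1)) (cat [false] (shf y (Nat.find h + 1)))
  else
    if h2 : ∃ i, DevPred t (shf y t.length) i then
      cat (tk (shf y t.length) (Nat.find h2 + 1))
        (cat [true] (shf (shf y t.length) (Nat.find h2 + 1)))
    else cat t (shf (shf y t.length) t.length)

lemma fF_dev {t : List Bool} {x : Cantor} {i : ℕ} (hi : i < t.length)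
    (hne : x i ≠ t.getD i false) (hmin : ∀ j < i, x j = t.getD j false) :
    fF t x = if x (i + 1) = true
      then cat (t ++ tk x (i + 1)) (shf x (i + 2))
      else cat (tk x (i + 1)) (shf x (i + 2)) := by
  have hex : ∃ j, DevPred t x j := ⟨i, hi, hne⟩
  have hfind : Nat.find hex = i := by
    rw [Nat.find_eq_iff]
    exact ⟨⟨hi, hne⟩, fun j hj hP => hP.2 (hmin j hj)⟩
  rw [fF, dif_pos hex, hfind]

lemma fF_nodev {t : List Bool} {x : Cantor} (h : ∀ i < t.length, x i = t.getD i false) :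
    fF t x = cat (t ++ t) (shf x t.length) := by
  have hex : ¬ ∃ i, DevPred t x i := by
    rintro ⟨i, hi, hne⟩
    exact hne (h i hi)
  rw [fF, dif_neg hex]

lemma fG_dev {t : List Bool} {y : Cantor} {i : ℕ} (hi : i < t.length)
    (hne : y i ≠ t.getD i false) (hmin : ∀ j < i, y j = t.getD j false) :
    fG t y = cat (tk y (i + 1)) (cat [false] (shf y (i + 1))) := by
  have hex : ∃ j, DevPred t y j := ⟨i, hi, hne⟩
  have hfind : Nat.find hex = i := by
    rw [Nat.find_eq_iff]
    exact ⟨⟨hi, hne⟩, fun j hj hP => hP.2 (hmin j hj)⟩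
  rw [fG, dif_pos hex, hfind]

lemma fG_middev {t : List Bool} {y : Cantor} {i : ℕ}
    (h : ∀ j < t.length, y j = t.getD j false)
    (hi : i < t.length) (hne : shf y t.length i ≠ t.getD i false)
    (hmin : ∀ j < i, shf y t.length j = t.getD j false) :
    fG t y = cat (tk (shf y t.length) (i + 1))
      (cat [true] (shf (shf y t.length) (i + 1))) := by
  have hex : ¬ ∃ j, DevPred t y j := by
    rintro ⟨j, hj, hne'⟩
    exact hne' (h j hj)
  have hex2 : ∃ j, DevPred t (shf y t.length) j := ⟨i, hi, hne⟩
  have hfind : Nat.find hex2 = i := by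
    rw [Nat.find_eq_iff]
    exact ⟨⟨hi, hne⟩, fun j hj hP => hP.2 (hmin j hj)⟩
  rw [fG, dif_neg hex, dif_pos hex2, hfind]

lemma fG_nodev {t : List Bool} {y : Cantor}
    (h : ∀ j < t.length, y j = t.getD j false)
    (h2 : ∀ j < t.length, shf y t.length j = t.getD j false) :
    fG t y = cat t (shf (shf y t.length) t.length) := by
  have hex : ¬ ∃ j, DevPred t y j := by
    rintro ⟨j, hj, hne'⟩
    exact hne' (h j hj)
  have hex2 : ¬ ∃ j, DevPred t (shf y t.length) j := by
    rintro ⟨j, hj, hne'⟩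
    exact hne' (h2 j hj)
  rw [fG, dif_neg hex, dif_neg hex2]

/-! entry computations -/

lemma cat_entry_append_left {a b : List Bool} {z : Cantor} {j : ℕ} (h : j < a.length) :
    cat (a ++ b) z j = a.getD j false := by
  rw [cat_lt (by simp; omega), List.getD_append _ _ _ _ h]

lemma tk_eq_of_agree {x : Cantor} {m : List Bool} {n : ℕ} (hl : m.length = n)
    (h : ∀ i < n, x i = m.getD i false) : tk x n = m := by
  apply list_eq_of_getD (by simp [hl])
  intro i hi
  simp only [tk_length] at hi
  rw [tk_getD _ hi, h i hi]

lemma eq_cat_of_tk {x : Cantor} {m : List Bool} {n : ℕ} (hl : m.length = n)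
    (h : tk x n = m) : x = cat m (shf x n) := by
  conv_lhs => rw [← cat_tk_shf x n]
  rw [h]

lemma shf_cat_of_len {m : List Bool} {z : Cantor} {n : ℕ} (h : m.length = n) :
    shf (cat m z) n = z := by
  rw [← h]; exact shf_cat m z

lemma shf_shf (x : Cantor) (a b : ℕ) : shf (shf x a) b = shf x (b + a) := by
  funext k; simp [shf]; congr 1; omega

lemma tk_one (z : Cantor) : tk z 1 = [z 0] := by
  apply list_eq_of_getD (by simp)
  intro j hj
  simp only [tk_length] at hj
  interval_cases j
  rw [tk_getD _ (by omega)]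
  simp [List.getD]

lemma tk_succ (x : Cantor) (n : ℕ) : tk x (n + 1) = tk x n ++ [x n] := by
  rw [tk_add x n 1, tk_one]
  simp [shf]

/-! the inverse identities -/

lemma fF_fG (t : List Bool) (x : Cantor) : fG t (fF t x) = x := by
  by_cases hex : ∃ i, DevPred t x i
  · -- deviation at i
    set i := Nat.find hex with hidef
    have hi : i < t.length := (Nat.find_spec hex).1
    have hne : x i ≠ t.getD i false := (Nat.find_spec hex).2
    have hmin : ∀ j < i, x j = t.getD j false := by
      intro j hj
      have hnd := Nat.find_min hex hj
      unfold DevPred at hnd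
      push_neg at hnd
      by_contra hc
      rcases Nat.lt_or_ge j t.length with h' | h'
      · exact hc (hnd h')
      · omega
    rw [fF_dev hi hne hmin]
    have hdv : ∀ j, j ≤ i → (tk x (i+1)).getD j false = x j := fun j hj => tk_getD x (by omega)
    by_cases hb : x (i + 1) = true
    · rw [if_pos hb]
      set F := cat (t ++ tk x (i+1)) (shf x (i+2)) with hF
      have hFt : ∀ j < t.length, F j = t.getD j false := by
        intro j hj
        rw [hF, cat_entry_append_left hj]
      have hη : shf F t.length = cat (tk x (i+1)) (shf x (i+2)) := by
        rw [hF, ← cat_cat, shf_cat]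
      have hηj : ∀ j ≤ i, shf F t.length j = x j := by
        intro j hj
        rw [hη, cat_lt (by simp; omega), hdv j hj]
      rw [fG_middev hFt hi (by rw [hηj i le_rfl]; exact hne) (fun j hj => by rw [hηj j (by omega), hmin j hj])]
      have e1 : tk (shf F t.length) (i+1) = tk x (i+1) := by
        apply tk_eq_of_agree (by simp)
        intro j hj
        rw [hηj j (by omega), tk_getD _ hj]
      have e2 : shf (shf F t.length) (i+1) = shf x (i+2) := by
        rw [hη, shf_cat_of_len (by simp)]
      rw [e1, e2, cat_cat]
      have etk : tk x (i+1) ++ [true] = tk x (i+2) := by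
        rw [show i + 2 = (i+1) + 1 by omega, tk_succ x (i+1), hb]
      rw [etk]
      exact cat_tk_shf x (i+2)
    · rw [if_neg hb]
      set F := cat (tk x (i+1)) (shf x (i+2)) with hF
      have hFj : ∀ j ≤ i, F j = x j := by
        intro j hj
        rw [hF, cat_lt (by simp; omega), hdv j hj]
      rw [fG_dev hi (by rw [hFj i le_rfl]; exact hne) (fun j hj => by rw [hFj j (by omega), hmin j hj])]
      have e1 : tk F (i+1) = tk x (i+1) := by
        apply tk_eq_of_agree (by simp)
        intro j hj
        rw [hFj j (by omega), tk_getD _ hj]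
      have e2 : shf F (i+1) = shf x (i+2) := by
        rw [hF, shf_cat_of_len (by simp)]
      have hb' : x (i+1) = false := by revert hb; cases x (i+1) <;> simp
      rw [e1, e2, cat_cat]
      have etk : tk x (i+1) ++ [false] = tk x (i+2) := by
        rw [show i + 2 = (i+1) + 1 by omega, tk_succ x (i+1), hb']
      rw [etk]
      exact cat_tk_shf x (i+2)
  · -- no deviation : x ∈ cyl t
    push_neg at hex
    have hagree : ∀ i < t.length, x i = t.getD i false := by
      intro i hi
      by_contra hc
      exact (hex i) ⟨hi, hc⟩
    rw [fF_nodev hagree]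
    set F := cat (t ++ t) (shf x t.length) with hF
    have hFt : ∀ j < t.length, F j = t.getD j false := by
      intro j hj
      rw [hF, cat_entry_append_left hj]
    have hη : shf F t.length = cat t (shf x t.length) := by
      rw [hF, ← cat_cat, shf_cat]
    have hηt : ∀ j < t.length, shf F t.length j = t.getD j false := by
      intro j hj
      rw [hη, cat_lt hj]
    rw [fG_nodev hFt hηt, hη, shf_cat]
    exact (eq_cat_of_tk rfl (tk_eq_of_agree rfl hagree)).symm

lemma fG_fF (t : List Bool) (y : Cantor) : fF t (fG t y) = y := by
  by_cases hex : ∃ i, DevPred t y i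
  · set i := Nat.find hex with hidef
    have hi : i < t.length := (Nat.find_spec hex).1
    have hne : y i ≠ t.getD i false := (Nat.find_spec hex).2
    have hmin : ∀ j < i, y j = t.getD j false := by
      intro j hj
      have hnd := Nat.find_min hex hj
      unfold DevPred at hnd
      push_neg at hnd
      by_contra hc
      rcases Nat.lt_or_ge j t.length with h' | h'
      · exact hc (hnd h')
      · omega
    rw [fG_dev hi hne hmin]
    set G := cat (tk y (i+1)) (cat [false] (shf y (i+1))) with hG
    have hGeq : G = cat (tk y (i+1) ++ [false]) (shf y (i+1)) := by rw [hG, cat_cat]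
    have hGj : ∀ j ≤ i, G j = y j := by
      intro j hj
      rw [hG, cat_lt (by simp; omega), tk_getD _ (by omega)]
    have hGi1 : G (i+1) = false := by
      rw [hGeq, cat_lt (by simp), List.getD_eq_getElem?_getD,
        List.getElem?_append_right (by simp)]
      simp
    rw [fF_dev hi (by rw [hGj i le_rfl]; exact hne) (fun j hj => by rw [hGj j (by omega), hmin j hj])]
    rw [if_neg (by rw [hGi1]; simp)]
    have e1 : tk G (i+1) = tk y (i+1) := by
      apply tk_eq_of_agree (by simp)
      intro j hj
      rw [hGj j (by omega), tk_getD _ hj]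
    have e2 : shf G (i+2) = shf y (i+1) := by
      rw [hGeq, shf_cat_of_len (by simp)]
    rw [e1, e2]
    exact cat_tk_shf y (i+1)
  · push_neg at hex
    have hagree : ∀ j < t.length, y j = t.getD j false := by
      intro j hj
      by_contra hc
      exact (hex j) ⟨hj, hc⟩
    by_cases hex2 : ∃ i, DevPred t (shf y t.length) i
    · set i := Nat.find hex2 with hidef
      have hi : i < t.length := (Nat.find_spec hex2).1
      have hne : shf y t.length i ≠ t.getD i false := (Nat.find_spec hex2).2
      have hmin : ∀ j < i, shf y t.length j = t.getD j false := by
        intro j hj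
        have hnd := Nat.find_min hex2 hj
        unfold DevPred at hnd
        push_neg at hnd
        by_contra hc
        rcases Nat.lt_or_ge j t.length with h' | h'
        · exact hc (hnd h')
        · omega
      rw [fG_middev hagree hi hne hmin]
      set η := shf y t.length with hηdef
      set G := cat (tk η (i+1)) (cat [true] (shf η (i+1))) with hG
      have hGeq : G = cat (tk η (i+1) ++ [true]) (shf η (i+1)) := by rw [hG, cat_cat]
      have hGj : ∀ j ≤ i, G j = η j := by
        intro j hj
        rw [hG, cat_lt (by simp; omega), tk_getD _ (by omega)]
      have hGi1 : G (i+1) = true := by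
        rw [hGeq, cat_lt (by simp), List.getD_eq_getElem?_getD,
          List.getElem?_append_right (by simp)]
        simp
      rw [fF_dev hi (by rw [hGj i le_rfl]; exact hne) (fun j hj => by rw [hGj j (by omega), hmin j hj])]
      rw [if_pos hGi1]
      have e1 : tk G (i+1) = tk η (i+1) := by
        apply tk_eq_of_agree (by simp)
        intro j hj
        rw [hGj j (by omega), tk_getD _ hj]
      have e2 : shf G (i+2) = shf η (i+1) := by
        rw [hGeq, shf_cat_of_len (by simp)]
      rw [e1, e2, ← cat_cat, cat_tk_shf]
      exact (eq_cat_of_tk rfl (tk_eq_of_agree rfl hagree)).symm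
    · push_neg at hex2
      have hagree2 : ∀ j < t.length, shf y t.length j = t.getD j false := by
        intro j hj
        by_contra hc
        exact (hex2 j) ⟨hj, hc⟩
      rw [fG_nodev hagree hagree2]
      have hnd : ∀ j < t.length, cat t (shf (shf y t.length) t.length) j = t.getD j false := by
        intro j hj
        rw [cat_lt hj]
      rw [fF_nodev hnd, shf_cat, ← cat_cat]
      have h1 : cat t (shf (shf y t.length) t.length) = shf y t.length :=
        (eq_cat_of_tk rfl (tk_eq_of_agree rfl hagree2)).symm
      rw [h1]
      exact (eq_cat_of_tk rfl (tk_eq_of_agree rfl hagree)).symm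

end Gamma
namespace Gamma

/-! ### Part 6: locality and the homeomorphism -/

def LocalRule (F : Cantor → Cantor) : Prop :=
  ∀ x : Cantor, ∃ m w : List Bool, x = cat m (shf x m.length) ∧
    ∀ z, F (cat m z) = cat w z

lemma fF_rule_nodev (t : List Bool) : ∀ z, fF t (cat t z) = cat (t ++ t) z := by
  intro z
  have hag : ∀ i < t.length, (cat t z) i = t.getD i false := fun i hi => cat_lt hi
  rw [fF_nodev hag, shf_cat]

lemma fF_local (t : List Bool) : LocalRule (fF t) := by
  intro x
  by_cases hex : ∃ i, DevPred t x i
  · set i := Nat.find hex with hidef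
    have hi : i < t.length := (Nat.find_spec hex).1
    have hne : x i ≠ t.getD i false := (Nat.find_spec hex).2
    have hmin : ∀ j < i, x j = t.getD j false := by
      intro j hj
      have hnd := Nat.find_min hex hj
      unfold DevPred at hnd
      push_neg at hnd
      by_contra hc
      rcases Nat.lt_or_ge j t.length with h' | h'
      · exact hc (hnd h')
      · omega
    refine ⟨tk x (i+2), if x (i+1) = true then t ++ tk x (i+1) else tk x (i+1), ?_, ?_⟩
    · rw [tk_length]
      exact (cat_tk_shf x (i+2)).symm
    · intro z
      set q := cat (tk x (i+2)) z with hq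
      have hqj : ∀ j ≤ i + 1, q j = x j := by
        intro j hj
        rw [hq, cat_lt (by simp; omega), tk_getD _ (by omega)]
      have h1 := fF_dev (x := q) hi (by rw [hqj i (by omega)]; exact hne)
        (fun j hj => by rw [hqj j (by omega), hmin j hj])
      rw [h1]
      have e1 : tk q (i+1) = tk x (i+1) := by
        apply tk_eq_of_agree (by simp)
        intro j hj
        rw [hqj j (by omega), tk_getD _ hj]
      have e2 : shf q (i+2) = z := by
        rw [hq, shf_cat_of_len (by simp)]
      rw [hqj (i+1) le_rfl, e1, e2]
      by_cases hb : x (i+1) = true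
      · rw [if_pos hb, if_pos hb]
      · rw [if_neg hb, if_neg hb]
  · push_neg at hex
    have hagree : ∀ i < t.length, x i = t.getD i false := by
      intro i hi
      by_contra hc
      exact (hex i) ⟨hi, hc⟩
    refine ⟨t, t ++ t, eq_cat_of_tk rfl (tk_eq_of_agree rfl hagree), fF_rule_nodev t⟩

lemma fG_local (t : List Bool) : LocalRule (fG t) := by
  intro y
  by_cases hex : ∃ i, DevPred t y i
  · set i := Nat.find hex with hidef
    have hi : i < t.length := (Nat.find_spec hex).1
    have hne : y i ≠ t.getD i false := (Nat.find_spec hex).2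
    have hmin : ∀ j < i, y j = t.getD j false := by
      intro j hj
      have hnd := Nat.find_min hex hj
      unfold DevPred at hnd
      push_neg at hnd
      by_contra hc
      rcases Nat.lt_or_ge j t.length with h' | h'
      · exact hc (hnd h')
      · omega
    refine ⟨tk y (i+1), tk y (i+1) ++ [false], ?_, ?_⟩
    · rw [tk_length]
      exact (cat_tk_shf y (i+1)).symm
    · intro z
      set q := cat (tk y (i+1)) z with hq
      have hqj : ∀ j ≤ i, q j = y j := by
        intro j hj
        rw [hq, cat_lt (by simp; omega), tk_getD _ (by omega)]
      rw [fG_dev hi (by rw [hqj i le_rfl]; exact hne)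
        (fun j hj => by rw [hqj j (by omega), hmin j hj])]
      have e1 : tk q (i+1) = tk y (i+1) := by
        apply tk_eq_of_agree (by simp)
        intro j hj
        rw [hqj j (by omega), tk_getD _ hj]
      have e2 : shf q (i+1) = z := by
        rw [hq, shf_cat_of_len (by simp)]
      rw [e1, e2, cat_cat]
  · push_neg at hex
    have hagree : ∀ j < t.length, y j = t.getD j false := by
      intro j hj
      by_contra hc
      exact (hex j) ⟨hj, hc⟩
    by_cases hex2 : ∃ i, DevPred t (shf y t.length) i
    · set i := Nat.find hex2 with hidef
      have hi : i < t.length := (Nat.find_spec hex2).1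
      have hne : shf y t.length i ≠ t.getD i false := (Nat.find_spec hex2).2
      have hmin : ∀ j < i, shf y t.length j = t.getD j false := by
        intro j hj
        have hnd := Nat.find_min hex2 hj
        unfold DevPred at hnd
        push_neg at hnd
        by_contra hc
        rcases Nat.lt_or_ge j t.length with h' | h'
        · exact hc (hnd h')
        · omega
      set η := shf y t.length with hηdef
      refine ⟨t ++ tk η (i+1), tk η (i+1) ++ [true], ?_, ?_⟩
      · have hy : y = cat t η := eq_cat_of_tk rfl (tk_eq_of_agree rfl hagree)
        have hη : η = cat (tk η (i+1)) (shf η (i+1)) := (cat_tk_shf η (i+1)).symm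
        conv_lhs => rw [hy, hη]
        rw [cat_cat]
        funext k
        rcases lt_or_ge k (t ++ tk η (i+1)).length with hk | hk
        · rw [cat_lt hk, cat_lt hk]
        · rw [cat_ge hk, cat_ge hk]
          simp only [shf]
          rw [hηdef]
          simp only [shf]
          congr 1
          have hlen : (t ++ tk η (i+1)).length = t.length + (i+1) := by simp
          have hlen2 : (t ++ tk (shf y t.length) (i+1)).length = t.length + (i+1) := by simp
          omega
      · intro z
        set q := cat (t ++ tk η (i+1)) z with hq
        have hqsplit : q = cat t (cat (tk η (i+1)) z) := by rw [hq, cat_cat]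
        have hqt : ∀ j < t.length, q j = t.getD j false := by
          intro j hj
          rw [hqsplit, cat_lt hj]
        have hqη : shf q t.length = cat (tk η (i+1)) z := by
          rw [hqsplit, shf_cat]
        have hqηj : ∀ j ≤ i, shf q t.length j = η j := by
          intro j hj
          rw [hqη, cat_lt (by simp; omega), tk_getD _ (by omega)]
        rw [fG_middev hqt hi (by rw [hqηj i le_rfl]; exact hne)
          (fun j hj => by rw [hqηj j (by omega), hmin j hj])]
        have e1 : tk (shf q t.length) (i+1) = tk η (i+1) := by
          apply tk_eq_of_agree (by simp)
          intro j hj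
          rw [hqηj j (by omega), tk_getD _ hj]
        have e2 : shf (shf q t.length) (i+1) = z := by
          rw [hqη, shf_cat_of_len (by simp)]
        rw [e1, e2, cat_cat]
    · push_neg at hex2
      have hagree2 : ∀ j < t.length, shf y t.length j = t.getD j false := by
        intro j hj
        by_contra hc
        exact (hex2 j) ⟨hj, hc⟩
      refine ⟨t ++ t, t, ?_, ?_⟩
      · have hy : y = cat t (shf y t.length) := eq_cat_of_tk rfl (tk_eq_of_agree rfl hagree)
        have hη : shf y t.length = cat t (shf (shf y t.length) t.length) :=
          eq_cat_of_tk rfl (tk_eq_of_agree rfl hagree2)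
        conv_lhs => rw [hy, hη]
        rw [cat_cat]
        funext k
        rcases lt_or_ge k (t ++ t).length with hk | hk
        · rw [cat_lt hk, cat_lt hk]
        · rw [cat_ge hk, cat_ge hk]
          simp only [shf]
          congr 1
          have hlen : (t ++ t).length = t.length + t.length := by simp
          omega
      · intro z
        set q := cat (t ++ t) z with hq
        have hqsplit : q = cat t (cat t z) := by rw [hq, cat_cat]
        have hqt : ∀ j < t.length, q j = t.getD j false := by
          intro j hj
          rw [hqsplit, cat_lt hj]
        have hqη : shf q t.length = cat t z := by rw [hqsplit, shf_cat]
        have hqη2 : ∀ j < t.length, shf q t.length j = t.getD j false := by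
          intro j hj
          rw [hqη, cat_lt hj]
        rw [fG_nodev hqt hqη2, hqη, shf_cat]

lemma cont_of_local {F : Cantor → Cantor} (h : LocalRule F) : Continuous F := by
  rw [continuous_iff_continuousAt]
  intro x
  intro U hU
  obtain ⟨m, w, hx, hr⟩ := h x
  rw [Filter.mem_map]
  rw [mem_nhds_iff] at hU
  obtain ⟨V, hVU, hVopen, hVmem⟩ := hU
  obtain ⟨n, hn⟩ := exists_prefix_subset hVopen hVmem
  have hFx : F x = cat w (shf x m.length) := by
    conv_lhs => rw [hx]
    rw [hr]
  rw [mem_nhds_iff]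
  refine ⟨{z : Cantor | ∀ i < m.length + n, z i = x i}, ?_, isOpen_agreeSet x _, fun i _ => rfl⟩
  intro z' hz'
  have hz'm : z' = cat m (shf z' m.length) := by
    apply cat_eq_of_agree
    intro i hi
    rw [hz' i (by omega)]
    conv_lhs => rw [hx]
    rw [cat_lt hi]
  have hFz' : F z' = cat w (shf z' m.length) := by
    conv_lhs => rw [hz'm]
    rw [hr]
  show F z' ∈ U
  apply hVU
  apply hn
  intro i hi
  rw [hFz', hFx]
  rcases lt_or_ge i w.length with h1 | h1
  · rw [cat_lt h1, cat_lt h1]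
  · rw [cat_ge h1, cat_ge h1]
    simp only [shf]
    rw [hz' _ (by omega)]

/-- The homeomorphism `tz ↦ ttz`. -/
noncomputable def testF (t : List Bool) : Cantor ≃ₜ Cantor where
  toFun := fF t
  invFun := fG t
  left_inv := fF_fG t
  right_inv := fG_fF t
  continuous_toFun := cont_of_local (fF_local t)
  continuous_invFun := cont_of_local (fG_local t)

end Gamma
namespace Gamma

/-! ### Part 7: the test element supported in a cylinder -/

lemma tk_cat (s : List Bool) (z : Cantor) : tk (cat s z) s.length = s :=
  tk_eq_of_agree rfl (fun i hi => cat_lt hi)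

noncomputable def EF (s t : List Bool) (x : Cantor) : Cantor :=
  if tk x s.length = s then cat s (fF t (shf x s.length)) else x

noncomputable def EG (s t : List Bool) (x : Cantor) : Cantor :=
  if tk x s.length = s then cat s (fG t (shf x s.length)) else x

lemma EF_EG (s t : List Bool) (x : Cantor) : EG s t (EF s t x) = x := by
  by_cases h : tk x s.length = s
  · rw [EF, if_pos h, EG, if_pos (tk_cat s _), shf_cat, fF_fG]
    exact (eq_cat_of_tk rfl h).symm
  · rw [EF, if_neg h, EG, if_neg h]

lemma EG_EF (s t : List Bool) (x : Cantor) : EF s t (EG s t x) = x := by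
  by_cases h : tk x s.length = s
  · rw [EG, if_pos h, EF, if_pos (tk_cat s _), shf_cat, fG_fF]
    exact (eq_cat_of_tk rfl h).symm
  · rw [EG, if_neg h, EF, if_neg h]

lemma ne_tk_entry {x : Cantor} {s : List Bool} (h : ¬ tk x s.length = s) :
    ∃ i < s.length, x i ≠ s.getD i false := by
  by_contra hc
  push_neg at hc
  exact h (tk_eq_of_agree rfl hc)

lemma EF_local (s t : List Bool) : LocalRule (EF s t) := by
  intro x
  by_cases h : tk x s.length = s
  · obtain ⟨m, w, hm, hr⟩ := fF_local t (shf x s.length)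
    refine ⟨s ++ m, s ++ w, ?_, ?_⟩
    · have hx : x = cat s (shf x s.length) := eq_cat_of_tk rfl h
      conv_lhs => rw [hx]
      conv_lhs => rw [hm]
      rw [cat_cat]
      funext k
      rcases lt_or_ge k (s ++ m).length with hk | hk
      · rw [cat_lt hk, cat_lt hk]
      · rw [cat_ge hk, cat_ge hk]
        simp only [shf]
        congr 1
        have hlen : (s ++ m).length = s.length + m.length := by simp
        omega
    · intro z
      have hsplit : cat (s ++ m) z = cat s (cat m z) := (cat_cat s m z).symm
      rw [hsplit, EF, if_pos (tk_cat s _), shf_cat, hr, cat_cat]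
  · obtain ⟨i, hi, hne⟩ := ne_tk_entry h
    refine ⟨tk x (i+1), tk x (i+1), ?_, ?_⟩
    · rw [tk_length]
      exact (cat_tk_shf x (i+1)).symm
    · intro z
      rw [EF, if_neg ?_]
      intro hc
      have h1 : (tk (cat (tk x (i+1)) z) s.length).getD i false = s.getD i false := by
        rw [hc]
      rw [tk_getD _ hi, cat_lt (by simp), tk_getD _ (by omega)] at h1
      exact hne h1

lemma EG_local (s t : List Bool) : LocalRule (EG s t) := by
  intro x
  by_cases h : tk x s.length = s
  · obtain ⟨m, w, hm, hr⟩ := fG_local t (shf x s.length)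
    refine ⟨s ++ m, s ++ w, ?_, ?_⟩
    · have hx : x = cat s (shf x s.length) := eq_cat_of_tk rfl h
      conv_lhs => rw [hx]
      conv_lhs => rw [hm]
      rw [cat_cat]
      funext k
      rcases lt_or_ge k (s ++ m).length with hk | hk
      · rw [cat_lt hk, cat_lt hk]
      · rw [cat_ge hk, cat_ge hk]
        simp only [shf]
        congr 1
        have hlen : (s ++ m).length = s.length + m.length := by simp
        omega
    · intro z
      have hsplit : cat (s ++ m) z = cat s (cat m z) := (cat_cat s m z).symm
      rw [hsplit, EG, if_pos (tk_cat s _), shf_cat, hr, cat_cat]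
  · obtain ⟨i, hi, hne⟩ := ne_tk_entry h
    refine ⟨tk x (i+1), tk x (i+1), ?_, ?_⟩
    · rw [tk_length]
      exact (cat_tk_shf x (i+1)).symm
    · intro z
      rw [EG, if_neg ?_]
      intro hc
      have h1 : (tk (cat (tk x (i+1)) z) s.length).getD i false = s.getD i false := by
        rw [hc]
      rw [tk_getD _ hi, cat_lt (by simp), tk_getD _ (by omega)] at h1
      exact hne h1

noncomputable def testE (s t : List Bool) : Cantor ≃ₜ Cantor where
  toFun := EF s t
  invFun := EG s t
  left_inv := EF_EG s t
  right_inv := EG_EF s t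
  continuous_toFun := cont_of_local (EF_local s t)
  continuous_invFun := cont_of_local (EG_local s t)

lemma memV_of_local {v : Cantor ≃ₜ Cantor} (h : LocalRule (v : Cantor → Cantor)) :
    memV v := by
  intro x
  obtain ⟨m, w, hm, hr⟩ := h x
  exact ⟨m, w, shf x m.length, hm, hr⟩

lemma testE_memV (s t : List Bool) : memV (testE s t) :=
  memV_of_local (EF_local s t)

lemma shf_tailSeq (t : List Bool) : shf (tailSeq t) t.length = tailSeq t := by
  funext k
  simp only [shf]
  exact tailSeq_add t k

lemma fF_tailSeq {t : List Bool} (ht : t ≠ []) : fF t (tailSeq t) = tailSeq t := by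
  have hρ : ∀ i < t.length, tailSeq t i = t.getD i false := fun i hi => tailSeq_lt hi
  rw [fF_nodev hρ, shf_tailSeq, ← cat_cat, cat_tailSeq ht, cat_tailSeq ht]

lemma testE_fix {s t : List Bool} (ht : t ≠ []) :
    testE s t (cat s (tailSeq t)) = cat s (tailSeq t) := by
  show EF s t (cat s (tailSeq t)) = cat s (tailSeq t)
  rw [EF, if_pos (tk_cat s _), shf_cat, fF_tailSeq ht]

lemma testE_slope {s t : List Bool} (ht : t ≠ []) :
    HasLogSlope (testE s t) (cat s (tailSeq t)) (-(t.length : ℤ)) := by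
  have hrule : ∀ z, testE s t (cat (s ++ t) z) = cat (s ++ (t ++ t)) z := by
    intro z
    show EF s t (cat (s ++ t) z) = cat (s ++ (t ++ t)) z
    have hsplit : cat (s ++ t) z = cat s (cat t z) := (cat_cat s t z).symm
    rw [hsplit, EF, if_pos (tk_cat s _), shf_cat, fF_rule_nodev, cat_cat]
  have hp : cat s (tailSeq t) = cat (s ++ t) (tailSeq t) := by
    rw [← cat_cat, cat_tailSeq ht]
  have := slope_of_rule hp hrule
  have heq : ((s ++ t).length : ℤ) - ((s ++ (t ++ t)).length : ℤ) = -(t.length : ℤ) := by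
    simp only [List.length_append]
    push_cast
    ring
  rwa [heq] at this

lemma testElem (s t : List Bool) (ht : t ≠ []) :
    ∃ e : Cantor ≃ₜ Cantor, memV e ∧ e (cat s (tailSeq t)) = cat s (tailSeq t) ∧
      HasLogSlope e (cat s (tailSeq t)) (-(t.length : ℤ)) :=
  ⟨testE s t, testE_memV s t, testE_fix ht, testE_slope ht⟩

end Gamma
section
open Gamma

/-- Let `φ` normalize `V` and let `c` be a prime word with
`φ⁻¹(Q₂)` the tail class of `c` (so `k_φ = |c|`).  If `v, w ∈ V` and `x ∈ Q₂` satisfy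
`vx = wx`, then
`log₂((φ⁻¹vφ)'(φ⁻¹x)) − k_φ·log₂(v'(x)) = log₂((φ⁻¹wφ)'(φ⁻¹x)) − k_φ·log₂(w'(x))`. -/
theorem gamma_well_defined (φ : Cantor ≃ₜ Cantor) (hφ : NormalizesV φ)
    (c : List Bool) (hc : PrimeWord c)
    (hclass : ∀ y : Cantor, InQ2 (φ y) ↔ InTailClass y c)
    (v w : Cantor ≃ₜ Cantor) (hv : memV v) (hw : memV w)
    (x : Cantor) (hx : InQ2 x) (hvw : v x = w x)
    (kv kw kv' kw' : ℤ)
    (h1 : HasLogSlope v x kv) (h2 : HasLogSlope w x kw)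
    (h3 : HasLogSlope (conjH φ.symm v) (φ.symm x) kv')
    (h4 : HasLogSlope (conjH φ.symm w) (φ.symm x) kw') :
    kv' - (c.length : ℤ) * kv = kw' - (c.length : ℤ) * kw := by
  classical
  have hφx' : φ (φ.symm x) = x := φ.apply_symm_apply x
  -- x is the tail class of [false]
  obtain ⟨n, hn⟩ := hx
  have hxcat : x = cat (tk x n) (tailSeq [false]) := by
    funext i
    rcases lt_or_ge i n with h | h
    · rw [cat_lt (by simpa using h), tk_getD _ h]
    · rw [cat_ge (by simpa using h), hn i h]
      simp [tailSeq]
  -- x' is in the tail class of c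
  have hx'tail : InTailClass (φ.symm x) c := by
    apply (hclass (φ.symm x)).mp
    rw [hφx']
    exact ⟨n, hn⟩
  obtain ⟨sx', hx'cat⟩ := hx'tail
  have hcne : c ≠ [] := hc.1
  have hLpos : 0 < (c.length : ℤ) := by
    have := List.length_pos_iff.2 hcne
    exact_mod_cast this
  -- the element u = w⁻¹ ∘ v fixing x
  set u : Cantor ≃ₜ Cantor := v.trans w.symm with hu
  have hufix : u x = x := by
    show w.symm (v x) = x
    rw [hvw]
    exact w.symm_apply_apply x
  have hsu : HasLogSlope u x (kv - kw) := by
    have h2' : HasLogSlope w.symm (v x) (-kw) := by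
      have := slope_symm h2
      rwa [← hvw] at this
    have := slope_comp h1 h2'
    rwa [sub_eq_add_neg]
  have hcv : conjH φ.symm u = (conjH φ.symm v).trans ((conjH φ.symm w).symm) := by
    rw [hu, conjH_trans, conjH_symm]
  have hpt2 : (conjH φ.symm v) (φ.symm x) = φ.symm (v x) := by
    rw [conjH_apply, Homeomorph.symm_symm, hφx']
  have hpt : (conjH φ.symm w) (φ.symm x) = φ.symm (v x) := by
    rw [conjH_apply, Homeomorph.symm_symm, hφx', hvw]
  have hw' : HasLogSlope (conjH φ.symm w).symm ((conjH φ.symm v) (φ.symm x)) (-kw') := by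
    have := slope_symm h4
    rwa [hpt, ← hpt2] at this
  have hsu' : HasLogSlope (conjH φ.symm u) (φ.symm x) (kv' - kw') := by
    rw [hcv, sub_eq_add_neg]
    exact slope_comp h3 hw'
  have hufix' : conjH φ.symm u (φ.symm x) = φ.symm x := conjH_fix hufix
  -- test element g at x, slope -1
  obtain ⟨g, hgV, hgfix, hgslope⟩ := testElem (tk x n) [false] (by simp)
  rw [← hxcat] at hgfix hgslope
  have hgslope1 : HasLogSlope g x (-1) := by
    have he : (-(([false] : List Bool).length : ℤ)) = -1 := by simp
    rwa [he] at hgslope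
  -- test element e at x', slope -|c|
  obtain ⟨e, heV, hefix, heslope⟩ := testElem sx' c hcne
  rw [← hx'cat] at hefix heslope
  -- conjugates
  have hg'V : memV (conjH φ.symm g) := memV_conj_symm hφ hgV
  obtain ⟨G, hG⟩ := memV_slope hg'V (φ.symm x)
  have hg'fix : conjH φ.symm g (φ.symm x) = φ.symm x := conjH_fix hgfix
  have hebV : memV (conjH φ e) := memV_conj hφ heV
  obtain ⟨E, hE⟩ := memV_slope hebV x
  have hebfix : conjH φ e x = x := by
    have := conjH_fix (ψ := φ) hefix
    rwa [hφx'] at this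
  have hebconj : HasLogSlope (conjH φ.symm (conjH φ e)) (φ.symm x) (-(c.length : ℤ)) := by
    rw [conjH_symm_conjH]
    exact heslope
  -- proportionality (a): L = E * G
  have ha : (-1 : ℤ) * (-(c.length : ℤ)) = E * G :=
    slope_prop (ψ := φ.symm) (p := x) hebfix hgfix hE hgslope1 hebconj hG
  -- proportionality (b)
  have hb : (-1 : ℤ) * (kv' - kw') = (kv - kw) * G :=
    slope_prop (ψ := φ.symm) (p := x) hufix hgfix hsu hgslope1 hsu' hG
  -- divisibility : c.length ∣ G
  have hdvd : (c.length : ℤ) ∣ G := by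
    obtain ⟨m, w₀, hm, hw₀, _hr, hGk⟩ := fix_both_prefix hg'fix hG
    have := prime_dvd_diff hc hx'cat hm hw₀
    rwa [← hGk] at this
  -- sign : G < 0
  have hsign : ¬ (0 < G) := fun hpos =>
    sign_lemma hgfix hgslope1 (by norm_num) hG hpos
  have hGne : G ≠ 0 := by
    intro h0
    rw [h0, mul_zero] at ha
    omega
  have hGneg : G < 0 := by
    rcases lt_trichotomy G 0 with h | h | h
    · exact h
    · exact absurd h hGne
    · exact absurd h hsign
  -- conclude G = -c.length
  obtain ⟨j, hj⟩ := hdvd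
  have hEj : E * j = 1 := by
    have h1 : (c.length : ℤ) = E * ((c.length : ℤ) * j) := by
      rw [← hj]; linarith [ha]
    have h2 : (c.length : ℤ) * (E * j) = (c.length : ℤ) * 1 := by ring_nf; linarith [h1]
    exact mul_left_cancel₀ (by omega) h2
  have hjneg : j < 0 := by
    rcases lt_trichotomy j 0 with h | h | h
    · exact h
    · rw [h, mul_zero] at hj; omega
    · nlinarith [hj]
  have hj1 : j = -1 := by
    have hunit : IsUnit j := IsUnit.of_mul_eq_one (a := j) E (by linarith [hEj, mul_comm E j])
    rcases Int.isUnit_iff.mp hunit with h | h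
    · omega
    · exact h
  have hGval : G = -(c.length : ℤ) := by rw [hj, hj1]; ring
  rw [hGval] at hb
  linear_combination -hb

end
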